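/- Let G be a convergence group on a compact metrizable space M with crossratio (·,·|·,·) defined from a G-finite symmetric annulus system generated by a single annulus (A⁻,A⁺). Let B₁, B₂, C₁, C₂ ⊆ M be sets such that for each i = 1,2 there are open sets Vᵢ ⊇ Bᵢ, Uᵢ ⊇ Cᵢ with disjoint closures. Then there exists K = K(B₁,B₂,C₁,C₂) < ∞ such that for all x ∈ B₁, y ∈ C₁, z ∈ B₂, t ∈ C₂, the crossratio satisfies (x,y|z,t) ≤ K. -/

import Mathlib

open Set Pointwise

section AnnulusSystem

variable {M : Type*} [TopologicalSpace M]

/-- An annulus on `M`: an ordered pair of disjoint closed sets whose union does not cover `M`. -/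
def IsAnnulus (A : Set M × Set M) : Prop :=
  IsClosed A.1 ∧ IsClosed A.2 ∧ Disjoint A.1 A.2 ∧ (A.1 ∪ A.2)ᶜ.Nonempty

/-- The relation `A < B` between annuli: `int A⁺ ∪ int B⁻ = M`. -/
def AnnLt (A B : Set M × Set M) : Prop := interior A.2 ∪ interior B.1 = Set.univ

/-- There is a chain `K < A₁ < ⋯ < Aₙ < L` of annuli of `𝒜`. -/
def HasChain (𝒜 : Set (Set M × Set M)) (K L : Set M) (n : ℕ) : Prop :=
  ∃ c : Fin n → Set M × Set M, (∀ i, c i ∈ 𝒜) ∧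
    (∀ i : Fin n, (i : ℕ) = 0 → K ⊆ interior (c i).1) ∧
    (∀ i j : Fin n, (i : ℕ) + 1 = (j : ℕ) → AnnLt (c i) (c j)) ∧
    (∀ i : Fin n, (i : ℕ) + 1 = n → L ⊆ interior (c i).2)

/-- The chain length `(K|L) ∈ ℕ ∪ {∞}`. -/
noncomputable def chainLen (𝒜 : Set (Set M × Set M)) (K L : Set M) : ℕ∞ :=
  ⨆ (n : ℕ) (_ : HasChain 𝒜 K L n), (n : ℕ∞)

/-- The crossratio `(x,y|z,t) := ({x,y}|{z,t})`. -/
noncomputable def crossratio (𝒜 : Set (Set M × Set M)) (x y z t : M) : ℕ∞ :=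
  chainLen 𝒜 {x, y} {z, t}

/-- The symmetric `G`-invariant annulus system generated by a single annulus `A`. -/
def annSys (G : Type*) [Group G] [MulAction G M] (A : Set M × Set M) :
    Set (Set M × Set M) :=
  {B | ∃ g : G, B = (g • A.1, g • A.2) ∨ B = (g • A.2, g • A.1)}

end AnnulusSystem

open Filter in
/-- A group action on a topological space has the convergence property if every sequence of
distinct elements has a subsequence converging locally uniformly on the complement of a
(repelling) point `a` to a constant (attracting) point `b`. -/
def ConvergenceAction (G M : Type*) [Group G] [TopologicalSpace M] [MulAction G M] : Prop :=
  ∀ g : ℕ → G, Function.Injective g →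
    ∃ φ : ℕ → ℕ, StrictMono φ ∧ ∃ a b : M,
      ∀ K : Set M, IsCompact K → K ⊆ {a}ᶜ →
        ∀ U ∈ nhds b, ∀ᶠ n in atTop, (g (φ n)) • K ⊆ U

open Filter in
private lemma meets_contra_aux {G M : Type*} [Group G] [TopologicalSpace M] [MulAction G M]
    (g : ℕ → G) (φ : ℕ → ℕ) (a b : M) (K : Set M)
    (hK : IsCompact K) (ha : a ∉ K)
    (hab : ∀ S : Set M, IsCompact S → S ⊆ {a}ᶜ →
      ∀ U ∈ nhds b, ∀ᶠ n in atTop, g (φ n) • S ⊆ U)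
    (P Q : Set M) (hPQ : closure P ∩ closure Q = ∅)
    (hP : ∀ n, ((g n) • K ∩ closure P).Nonempty)
    (hQ : ∀ n, ((g n) • K ∩ closure Q).Nonempty) : False := by
  have hsub : K ⊆ ({a}ᶜ : Set M) := by
    intro m hm
    simp only [Set.mem_compl_iff, Set.mem_singleton_iff]
    rintro rfl; exact ha hm
  have hb : b ∉ closure P ∨ b ∉ closure Q := by
    by_contra h
    push_neg at h
    have : b ∈ closure P ∩ closure Q := ⟨h.1, h.2⟩
    rw [hPQ] at this
    exact this
  rcases hb with hb | hb
  · have hev := hab K hK hsub (closure P)ᶜ (isClosed_closure.isOpen_compl.mem_nhds hb)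
    obtain ⟨n, hn⟩ := hev.exists
    obtain ⟨m, hm1, hm2⟩ := hP (φ n)
    exact hn hm1 hm2
  · have hev := hab K hK hsub (closure Q)ᶜ (isClosed_closure.isOpen_compl.mem_nhds hb)
    obtain ⟨n, hn⟩ := hev.exists
    obtain ⟨m, hm1, hm2⟩ := hQ (φ n)
    exact hn hm1 hm2

open Filter in
private lemma meets_finite_aux {G M : Type*} [Group G] [TopologicalSpace M] [CompactSpace M]
    [MulAction G M] (hconv : ConvergenceAction G M)
    (K₁ K₂ : Set M) (hK₁ : IsClosed K₁) (hK₂ : IsClosed K₂) (hd : Disjoint K₁ K₂)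
    (P₁ Q₁ P₂ Q₂ : Set M) (h1 : closure P₁ ∩ closure Q₁ = ∅)
    (h2 : closure P₂ ∩ closure Q₂ = ∅) :
    {g : G | (g • K₁ ∩ closure P₁).Nonempty ∧ (g • K₁ ∩ closure Q₁).Nonempty ∧
      (g • K₂ ∩ closure P₂).Nonempty ∧ (g • K₂ ∩ closure Q₂).Nonempty}.Finite := by
  by_contra hinf
  let e := Set.Infinite.natEmbedding _ hinf
  have hginj : Function.Injective (fun n => (e n : G)) := by
    intro m n h
    exact e.injective (Subtype.coe_injective h)
  obtain ⟨φ, hφ, a, b, hab⟩ := hconv _ hginj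
  have ha : a ∉ K₁ ∨ a ∉ K₂ := by
    by_contra h
    push_neg at h
    exact Set.disjoint_left.mp hd h.1 h.2
  rcases ha with ha | ha
  · exact meets_contra_aux _ φ a b K₁ hK₁.isCompact ha hab P₁ Q₁ h1
      (fun n => (e n).2.1) (fun n => (e n).2.2.1)
  · exact meets_contra_aux _ φ a b K₂ hK₂.isCompact ha hab P₂ Q₂ h2
      (fun n => (e n).2.2.2.1) (fun n => (e n).2.2.2.2)

theorem crossratio_bounded_on_separated_sets
    {G M : Type*} [Group G] [Countable G] [TopologicalSpace M]
    [CompactSpace M] [TopologicalSpace.MetrizableSpace M] [MulAction G M]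
    (hcont : ∀ g : G, Continuous fun m : M => g • m)
    (hconv : ConvergenceAction G M)
    (A : Set M × Set M) (hA : IsAnnulus A)
    (B₁ C₁ B₂ C₂ : Set M)
    (hsep : ∀ i : Fin 2,
      ∃ V U : Set M, IsOpen V ∧ IsOpen U ∧
        (if i = 0 then B₁ else B₂) ⊆ V ∧ (if i = 0 then C₁ else C₂) ⊆ U ∧
        closure V ∩ closure U = ∅) :
    ∃ K : ℕ, ∀ x ∈ B₁, ∀ y ∈ C₁, ∀ z ∈ B₂, ∀ t ∈ C₂,
      crossratio (annSys G A) x y z t ≤ (K : ℕ∞) := by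
  obtain ⟨V₁, U₁, hV₁o, hU₁o, hBV₁, hCU₁, hVU₁⟩ := hsep 0
  obtain ⟨V₂, U₂, hV₂o, hU₂o, hBV₂, hCU₂, hVU₂⟩ := hsep 1
  simp only [show ((0 : Fin 2) = 0) = True from by simp, show ((1 : Fin 2) = 0) = False from by simp,
    if_true, if_false] at hBV₁ hCU₁ hBV₂ hCU₂
  obtain ⟨hA1c, hA2c, hAd, hAne⟩ := hA
  have hS₁ := meets_finite_aux (G := G) hconv A.1 A.2 hA1c hA2c hAd V₁ U₁ V₂ U₂ hVU₁ hVU₂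
  have hS₂ := meets_finite_aux (G := G) hconv A.2 A.1 hA2c hA1c hAd.symm V₁ U₁ V₂ U₂ hVU₁ hVU₂
  have hT := (hS₁.image (fun g : G => (g • A.1, g • A.2))).union
    (hS₂.image (fun g : G => (g • A.2, g • A.1)))
  refine ⟨hT.toFinset.card, ?_⟩
  intro x hx y hy z hz t ht
  simp only [crossratio, chainLen]
  refine iSup₂_le fun n hn => ?_
  rw [Nat.cast_le]
  obtain ⟨c, hcmem, hfirst, hmid, hlast⟩ := hn
  -- basic properties of each annulus in the chain
  have hprop : ∀ i : Fin n, Disjoint (c i).1 (c i).2 ∧ ((c i).1 ∪ (c i).2)ᶜ.Nonempty := by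
    intro i
    obtain ⟨g, hg | hg⟩ := hcmem i
    · rw [hg]
      refine ⟨disjoint_smul_set.mpr hAd, ?_⟩
      show ((g • A.1) ∪ (g • A.2))ᶜ.Nonempty
      rw [← Set.smul_set_union, ← Set.smul_set_compl]
      exact hAne.smul_set
    · rw [hg]
      refine ⟨disjoint_smul_set.mpr hAd.symm, ?_⟩
      show ((g • A.2) ∪ (g • A.1))ᶜ.Nonempty
      rw [Set.union_comm, ← Set.smul_set_union, ← Set.smul_set_compl]
      exact hAne.smul_set
  -- x and y belong to the interior of the negative part of every annulus in the chain
  have hxy : ∀ m (hm : m < n),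
      x ∈ interior (c ⟨m, hm⟩).1 ∧ y ∈ interior (c ⟨m, hm⟩).1 := by
    intro m
    induction m with
    | zero =>
      intro hm
      have h := hfirst ⟨0, hm⟩ rfl
      exact ⟨h (by simp), h (by simp)⟩
    | succ m ih =>
      intro hm
      have hm' : m < n := Nat.lt_of_succ_lt hm
      have hprev := ih hm'
      have hlt := hmid ⟨m, hm'⟩ ⟨m + 1, hm⟩ rfl
      have hd' := (hprop ⟨m, hm'⟩).1
      constructor
      · have hx2 : x ∉ interior (c ⟨m, hm'⟩).2 := fun h =>
          Set.disjoint_left.mp hd' (interior_subset hprev.1) (interior_subset h)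
        have hxu : x ∈ interior (c ⟨m, hm'⟩).2 ∪ interior (c ⟨m + 1, hm⟩).1 := by
          rw [hlt]; trivial
        exact hxu.resolve_left hx2
      · have hy2 : y ∉ interior (c ⟨m, hm'⟩).2 := fun h =>
          Set.disjoint_left.mp hd' (interior_subset hprev.2) (interior_subset h)
        have hyu : y ∈ interior (c ⟨m, hm'⟩).2 ∪ interior (c ⟨m + 1, hm⟩).1 := by
          rw [hlt]; trivial
        exact hyu.resolve_left hy2
  -- z and t belong to the interior of the positive part of every annulus in the chain
  have hzt : ∀ k, ∀ i : Fin n, (i : ℕ) + 1 + k = n →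
      z ∈ interior (c i).2 ∧ t ∈ interior (c i).2 := by
    intro k
    induction k with
    | zero =>
      intro i hi
      have h := hlast i (by omega)
      exact ⟨h (by simp), h (by simp)⟩
    | succ k ih =>
      intro i hi
      have hjlt : (i : ℕ) + 1 < n := by omega
      have hj := ih ⟨(i : ℕ) + 1, hjlt⟩ (by simp; omega)
      have hlt := hmid i ⟨(i : ℕ) + 1, hjlt⟩ rfl
      have hd' := (hprop ⟨(i : ℕ) + 1, hjlt⟩).1
      constructor
      · have hz1 : z ∉ interior (c ⟨(i : ℕ) + 1, hjlt⟩).1 := fun h =>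
          Set.disjoint_left.mp hd' (interior_subset h) (interior_subset hj.1)
        have hzu : z ∈ interior (c i).2 ∪ interior (c ⟨(i : ℕ) + 1, hjlt⟩).1 := by
          rw [hlt]; trivial
        exact hzu.resolve_right hz1
      · have ht1 : t ∉ interior (c ⟨(i : ℕ) + 1, hjlt⟩).1 := fun h =>
          Set.disjoint_left.mp hd' (interior_subset h) (interior_subset hj.2)
        have htu : t ∈ interior (c i).2 ∪ interior (c ⟨(i : ℕ) + 1, hjlt⟩).1 := by
          rw [hlt]; trivial
        exact htu.resolve_right ht1
  -- AnnLt relates any two chain elements in increasing order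
  have hchainlt : ∀ d : ℕ, ∀ i j : Fin n, (j : ℕ) = (i : ℕ) + d + 1 → AnnLt (c i) (c j) := by
    intro d
    induction d with
    | zero => intro i j hij; exact hmid i j (by omega)
    | succ d ih =>
      intro i j hij
      have hjlt : (i : ℕ) + d + 1 < n := by omega
      have h1 := ih i ⟨(i : ℕ) + d + 1, hjlt⟩ rfl
      have h2 := hmid ⟨(i : ℕ) + d + 1, hjlt⟩ j (by simp; omega)
      have hdj := (hprop ⟨(i : ℕ) + d + 1, hjlt⟩).1
      apply Set.eq_univ_of_forall
      intro m
      have hm1 : m ∈ interior (c i).2 ∪ interior (c ⟨(i : ℕ) + d + 1, hjlt⟩).1 := by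
        rw [h1]; trivial
      rcases hm1 with h | h
      · exact Or.inl h
      · have hnot : m ∉ interior (c ⟨(i : ℕ) + d + 1, hjlt⟩).2 := fun h' =>
          Set.disjoint_left.mp hdj (interior_subset h) (interior_subset h')
        have hm2 : m ∈ interior (c ⟨(i : ℕ) + d + 1, hjlt⟩).2 ∪ interior (c j).1 := by
          rw [h2]; trivial
        exact Or.inr (hm2.resolve_left hnot)
  -- conclude
  have key : (Finset.univ : Finset (Fin n)).card ≤ hT.toFinset.card := by
    apply Finset.card_le_card_of_injOn c
    · intro i _
      rw [Finset.mem_coe, Set.Finite.mem_toFinset]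
      have hx1 : x ∈ (c i).1 := interior_subset (hxy i.1 i.2).1
      have hy1 : y ∈ (c i).1 := interior_subset (hxy i.1 i.2).2
      have hz2 : z ∈ (c i).2 := interior_subset (hzt (n - 1 - (i : ℕ)) i (by omega)).1
      have ht2 : t ∈ (c i).2 := interior_subset (hzt (n - 1 - (i : ℕ)) i (by omega)).2
      obtain ⟨g, hg | hg⟩ := hcmem i
      · rw [hg] at hx1 hy1 hz2 ht2
        exact Or.inl ⟨g, ⟨⟨x, hx1, subset_closure (hBV₁ hx)⟩, ⟨y, hy1, subset_closure (hCU₁ hy)⟩,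
          ⟨z, hz2, subset_closure (hBV₂ hz)⟩, ⟨t, ht2, subset_closure (hCU₂ ht)⟩⟩, hg.symm⟩
      · rw [hg] at hx1 hy1 hz2 ht2
        exact Or.inr ⟨g, ⟨⟨x, hx1, subset_closure (hBV₁ hx)⟩, ⟨y, hy1, subset_closure (hCU₁ hy)⟩,
          ⟨z, hz2, subset_closure (hBV₂ hz)⟩, ⟨t, ht2, subset_closure (hCU₂ ht)⟩⟩, hg.symm⟩
    · intro i _ j _ hij
      by_contra hne
      have hself : AnnLt (c i) (c i) := by
        rcases lt_trichotomy (i : ℕ) (j : ℕ) with h | h | h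
        · have := hchainlt ((j : ℕ) - (i : ℕ) - 1) i j (by omega)
          rwa [← hij] at this
        · exact absurd (Fin.ext h) hne
        · have := hchainlt ((i : ℕ) - (j : ℕ) - 1) j i (by omega)
          rwa [← hij] at this
      obtain ⟨m, hm⟩ := (hprop i).2
      apply hm
      have hmu : m ∈ interior (c i).2 ∪ interior (c i).1 := by rw [hself]; trivial
      rcases hmu with h | h
      · exact Or.inr (interior_subset h)
      · exact Or.inl (interior_subset h)
  simpa using key
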